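/- For all distinct primes p, q and all integers k, r, u, v ≥ 1, one has s(p^k·q^r) ~ s(p^u·q^v). In particular (taking one prime) s(p^k) ~ s(p^u) for all primes p and integers k, u ≥ 1. -/
import Mathlib


noncomputable section
set_option maxHeartbeats 1000000
open scoped TensorProduct

instance (p : Nat.Primes) : Fact (p : ℕ).Prime := ⟨p.2⟩

/-- The profinite integers `Ẑ = ∏_p ℤ_p`. -/
abbrev ZHat : Type := ∀ p : Nat.Primes, ℤ_[(p : ℕ)]

/-- The finite adele ring `𝔸_f = Ẑ ⊗ ℚ` of `ℚ`. -/
abbrev AF : Type := ZHat ⊗[ℤ] ℚ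

/-- The embedding `Ẑ ⊆ 𝔸_f`. -/
def iZ : ZHat →+* AF := Algebra.TensorProduct.includeLeftRingHom

/-- The diagonal embedding `ℚ ⊆ 𝔸_f`. -/
def iQ : ℚ →+* AF :=
  (Algebra.TensorProduct.includeRight (R := ℤ) (A := ZHat) (B := ℚ)).toRingHom

/-- The relation `z ~ z'` on `𝔸_f`: there are `a, b, c, d ∈ ℚ` with `ad − bc ≠ 0`,
`a + c·z` a unit of `𝔸_f`, and `(b + d·z)·(a + c·z)⁻¹ − z'` in the diagonal image
of `ℚ` (the partially defined `PGL₂(ℚ)`-action `z ↦ (b+dz)/(a+cz)`). -/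
def adeleRel (z z' : AF) : Prop :=
  ∃ a b c d : ℚ, a * d - b * c ≠ 0 ∧
    ∃ w : AF, (iQ a + iQ c * z) * w = 1 ∧
      ∃ q : ℚ, (iQ b + iQ d * z) * w - z' = iQ q

/-- The profinite integer `s(n)` whose `p`-th component is `p^{v_p(n)}`, the largest
power of `p` dividing `n` (with component `0` when `n = 0`). -/
def sFun (n : ℕ) : ZHat :=
  fun p => if n = 0 then 0 else ((p : ℕ) : ℤ_[(p : ℕ)]) ^ (n.factorization (p : ℕ))

set_option synthInstance.maxHeartbeats 1000000

/-- The generic construction: if `s, s'` satisfy a monic cubic relation with integer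
roots and an integral Möbius relation with all relevant quantities nonzero, then
`iZ s ~ iZ s'`. -/
lemma adeleRel_of (s s' : ZHat) (a b c d x1 x2 x3 : ℤ)
    (hdet : a * d - b * c ≠ 0)
    (h1 : a + c * x1 ≠ 0) (h2 : a + c * x2 ≠ 0) (h3 : a + c * x3 ≠ 0)
    (hcube : (s - (x1 : ZHat)) * (s - (x2 : ZHat)) * (s - (x3 : ZHat)) = 0)
    (hlin : (b : ZHat) + (d : ZHat) * s = s' * ((a : ZHat) + (c : ZHat) * s)) :
    adeleRel (iZ s) (iZ s') := by
  have hiZ : ∀ n : ℤ, iZ ((n : ℤ) : ZHat) = (n : AF) := fun n => map_intCast iZ n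
  have hiQ : ∀ n : ℤ, iQ ((n : ℤ) : ℚ) = (n : AF) := fun n => map_intCast iQ n
  set E1 : ℤ := (a + c * x1) + (a + c * x2) + (a + c * x3) with hE1
  set E2 : ℤ := (a + c * x1) * (a + c * x2) + (a + c * x1) * (a + c * x3)
      + (a + c * x2) * (a + c * x3) with hE2
  set E3 : ℤ := (a + c * x1) * (a + c * x2) * (a + c * x3) with hE3
  have hE3Q : ((E3 : ℤ) : ℚ) ≠ 0 := by
    exact_mod_cast mul_ne_zero (mul_ne_zero h1 h2) h3
  set T : AF := (a : AF) + (c : AF) * iZ s with hT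
  set w : AF := iQ (((E3 : ℤ) : ℚ))⁻¹ * (T * T - (E1 : AF) * T + (E2 : AF)) with hw
  have hcubeAF : (iZ s - (x1 : AF)) * (iZ s - (x2 : AF)) * (iZ s - (x3 : AF)) = 0 := by
    rw [← hiZ x1, ← hiZ x2, ← hiZ x3, ← map_sub, ← map_sub, ← map_sub, ← map_mul,
      ← map_mul, hcube, map_zero]
  have hTid : T * (T * T - (E1 : AF) * T + (E2 : AF)) = (E3 : AF) := by
    have key : T * (T * T - (E1 : AF) * T + (E2 : AF)) - (E3 : AF)
        = (c : AF) ^ 3 * ((iZ s - (x1 : AF)) * (iZ s - (x2 : AF)) * (iZ s - (x3 : AF))) := by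
      rw [hT, hE1, hE2, hE3]
      push_cast
      ring
    rw [hcubeAF, mul_zero] at key
    linear_combination key
  have hTw : T * w = 1 := by
    calc T * w = iQ (((E3 : ℤ) : ℚ))⁻¹ * (T * (T * T - (E1 : AF) * T + (E2 : AF))) := by
          rw [hw]; ring
      _ = iQ (((E3 : ℤ) : ℚ))⁻¹ * iQ ((E3 : ℤ) : ℚ) := by rw [hTid, hiQ]
      _ = 1 := by rw [← map_mul, inv_mul_cancel₀ hE3Q, map_one]
  have hlinAF : (b : AF) + (d : AF) * iZ s = iZ s' * T := by
    have h := congrArg iZ hlin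
    simp only [map_add, map_mul, map_intCast] at h
    rw [hT]
    exact h
  refine ⟨(a : ℚ), (b : ℚ), (c : ℚ), (d : ℚ), by exact_mod_cast hdet, w, ?_, 0, ?_⟩
  · rw [hiQ a, hiQ c]
    exact hTw
  · rw [hiQ b, hiQ d, hlinAF, map_zero, sub_eq_zero, mul_assoc, hTw, mul_one]

lemma sFun_cases2 (p q : ℕ) (hp : p.Prime) (hq : q.Prime) (hpq : p ≠ q)
    (k r u v : ℕ) (ℓ : Nat.Primes) :
    (sFun (p ^ k * q ^ r) ℓ = ((p : ℤ_[(ℓ : ℕ)])) ^ k ∧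
     sFun (p ^ u * q ^ v) ℓ = ((p : ℤ_[(ℓ : ℕ)])) ^ u) ∨
    (sFun (p ^ k * q ^ r) ℓ = ((q : ℤ_[(ℓ : ℕ)])) ^ r ∧
     sFun (p ^ u * q ^ v) ℓ = ((q : ℤ_[(ℓ : ℕ)])) ^ v) ∨
    (sFun (p ^ k * q ^ r) ℓ = 1 ∧ sFun (p ^ u * q ^ v) ℓ = 1) := by
  have key : ∀ k' r' : ℕ, sFun (p ^ k' * q ^ r') ℓ
      = ((ℓ : ℕ) : ℤ_[(ℓ : ℕ)]) ^ ((Finsupp.single p k' + Finsupp.single q r') (ℓ : ℕ)) := by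
    intro k' r'
    have hN : p ^ k' * q ^ r' ≠ 0 :=
      mul_ne_zero (pow_ne_zero _ hp.pos.ne') (pow_ne_zero _ hq.pos.ne')
    unfold sFun
    rw [if_neg hN, Nat.factorization_mul (pow_ne_zero _ hp.pos.ne') (pow_ne_zero _ hq.pos.ne'),
      hp.factorization_pow, hq.factorization_pow]
  have hqp : q ≠ p := Ne.symm hpq
  by_cases hℓp : (ℓ : ℕ) = p
  · left
    constructor <;>
      · rw [key]
        simp [Finsupp.single_apply, hℓp, hqp, hpq]
  · by_cases hℓq : (ℓ : ℕ) = q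
    · right; left
      have hpℓ : p ≠ (ℓ : ℕ) := by rw [hℓq]; exact hpq
      constructor <;>
        · rw [key]
          simp [Finsupp.single_apply, hℓq, hpℓ, hqp, hpq]
    · right; right
      have hpℓ : p ≠ (ℓ : ℕ) := Ne.symm hℓp
      have hqℓ : q ≠ (ℓ : ℕ) := Ne.symm hℓq
      constructor <;>
        · rw [key]
          simp [Finsupp.single_apply, hpℓ, hqℓ]

lemma sFun_cases1 (p : ℕ) (hp : p.Prime) (k u : ℕ) (ℓ : Nat.Primes) :
    (sFun (p ^ k) ℓ = ((p : ℤ_[(ℓ : ℕ)])) ^ k ∧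
     sFun (p ^ u) ℓ = ((p : ℤ_[(ℓ : ℕ)])) ^ u) ∨
    (sFun (p ^ k) ℓ = 1 ∧ sFun (p ^ u) ℓ = 1) := by
  have key : ∀ k' : ℕ, sFun (p ^ k') ℓ
      = ((ℓ : ℕ) : ℤ_[(ℓ : ℕ)]) ^ ((Finsupp.single p k') (ℓ : ℕ)) := by
    intro k'
    have hN : p ^ k' ≠ 0 := pow_ne_zero _ hp.pos.ne'
    unfold sFun
    rw [if_neg hN, hp.factorization_pow]
  by_cases hℓp : (ℓ : ℕ) = p
  · left
    constructor <;>
      · rw [key]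
        simp [Finsupp.single_apply, hℓp]
  · right
    have hpℓ : p ≠ (ℓ : ℕ) := Ne.symm hℓp
    constructor <;>
      · rw [key]
        simp [Finsupp.single_apply, hpℓ]

lemma pow_ne_pow_of_primes {p q : ℕ} (hp : p.Prime) (hq : q.Prime) (hpq : p ≠ q)
    {k r : ℕ} (hk : 1 ≤ k) : p ^ k ≠ q ^ r := by
  intro h
  have hdvd : p ∣ q ^ r := h ▸ dvd_pow_self p (Nat.one_le_iff_ne_zero.mp hk)
  exact hpq ((Nat.prime_dvd_prime_iff_eq hp hq).mp (hp.dvd_of_dvd_pow hdvd))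

/-- for distinct primes `p, q` and integers `k, r, u, v ≥ 1` one has
`s(p^k·q^r) ~ s(p^u·q^v)`; in particular `s(p^k) ~ s(p^u)` for every prime `p` and
integers `k, u ≥ 1`. -/
theorem rel_sFun_two_primes :
    (∀ p q : ℕ, p.Prime → q.Prime → p ≠ q → ∀ k r u v : ℕ,
      1 ≤ k → 1 ≤ r → 1 ≤ u → 1 ≤ v →
        adeleRel (iZ (sFun (p ^ k * q ^ r))) (iZ (sFun (p ^ u * q ^ v)))) ∧
    (∀ p : ℕ, p.Prime → ∀ k u : ℕ, 1 ≤ k → 1 ≤ u →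
      adeleRel (iZ (sFun (p ^ k))) (iZ (sFun (p ^ u)))) := by
  constructor
  · intro p q hp hq hpq k r u v hk hr hu hv
    set P : ℤ := (p : ℤ) ^ k with hPdef
    set Q : ℤ := (q : ℤ) ^ r with hQdef
    set U : ℤ := (p : ℤ) ^ u with hUdef
    set V : ℤ := (q : ℤ) ^ v with hVdef
    have hP1 : (1 : ℤ) < P := by
      rw [hPdef]; exact_mod_cast Nat.one_lt_pow (Nat.one_le_iff_ne_zero.mp hk) hp.one_lt
    have hQ1 : (1 : ℤ) < Q := by
      rw [hQdef]; exact_mod_cast Nat.one_lt_pow (Nat.one_le_iff_ne_zero.mp hr) hq.one_lt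
    have hU1 : (1 : ℤ) < U := by
      rw [hUdef]; exact_mod_cast Nat.one_lt_pow (Nat.one_le_iff_ne_zero.mp hu) hp.one_lt
    have hV1 : (1 : ℤ) < V := by
      rw [hVdef]; exact_mod_cast Nat.one_lt_pow (Nat.one_le_iff_ne_zero.mp hv) hq.one_lt
    have hPQ : P ≠ Q := by
      rw [hPdef, hQdef]
      exact_mod_cast pow_ne_pow_of_primes hp hq hpq hk
    have hUV : U ≠ V := by
      rw [hUdef, hVdef]
      exact_mod_cast pow_ne_pow_of_primes hp hq hpq hu
    have hP1' : P - 1 ≠ 0 := sub_ne_zero.mpr (ne_of_gt hP1)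
    have hQ1' : (1 : ℤ) - Q ≠ 0 := sub_ne_zero.mpr (ne_of_lt hQ1)
    have hU1' : U - 1 ≠ 0 := sub_ne_zero.mpr (ne_of_gt hU1)
    have hV1' : (1 : ℤ) - V ≠ 0 := sub_ne_zero.mpr (ne_of_lt hV1)
    have hPQ' : P - Q ≠ 0 := sub_ne_zero.mpr hPQ
    have hUV' : U - V ≠ 0 := sub_ne_zero.mpr hUV
    apply adeleRel_of _ _
      ((U - 1) * (P - Q) - Q * (U - V) * (P - 1))
      (V * (U - 1) * (P - Q) - Q * (U - V) * (P - 1))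
      (-((U - 1) * (P - Q)) + (U - V) * (P - 1))
      (-(V * (U - 1) * (P - Q)) + (U - V) * (P - 1))
      1 P Q
    · -- determinant
      have : ((U - 1) * (P - Q) - Q * (U - V) * (P - 1)) *
          (-(V * (U - 1) * (P - Q)) + (U - V) * (P - 1)) -
          (V * (U - 1) * (P - Q) - Q * (U - V) * (P - 1)) *
          (-((U - 1) * (P - Q)) + (U - V) * (P - 1))
          = (P - Q) * (P - 1) * (1 - Q) * (U - V) * (U - 1) * (1 - V) := by ring
      rw [this]
      exact mul_ne_zero (mul_ne_zero (mul_ne_zero (mul_ne_zero (mul_ne_zero hPQ' hP1') hQ1')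
        hUV') hU1') hV1'
    · have : ((U - 1) * (P - Q) - Q * (U - V) * (P - 1)) +
          (-((U - 1) * (P - Q)) + (U - V) * (P - 1)) * 1
          = (U - V) * (P - 1) * (1 - Q) := by ring
      rw [this]
      exact mul_ne_zero (mul_ne_zero hUV' hP1') hQ1'
    · have : ((U - 1) * (P - Q) - Q * (U - V) * (P - 1)) +
          (-((U - 1) * (P - Q)) + (U - V) * (P - 1)) * P
          = (P - 1) * (P - Q) * (1 - V) := by ring
      rw [this]
      exact mul_ne_zero (mul_ne_zero hP1' hPQ') hV1'
    · have : ((U - 1) * (P - Q) - Q * (U - V) * (P - 1)) +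
          (-((U - 1) * (P - Q)) + (U - V) * (P - 1)) * Q
          = (U - 1) * (P - Q) * (1 - Q) := by ring
      rw [this]
      exact mul_ne_zero (mul_ne_zero hU1' hPQ') hQ1'
    · -- cubic relation
      funext ℓ
      rcases sFun_cases2 p q hp hq hpq k r u v ℓ with ⟨h, _⟩ | ⟨h, _⟩ | ⟨h, _⟩ <;>
        · simp only [Pi.mul_apply, Pi.sub_apply, Pi.intCast_apply, Pi.zero_apply, h,
            hPdef, hQdef]
          push_cast
          ring
    · -- linear relation
      funext ℓ
      rcases sFun_cases2 p q hp hq hpq k r u v ℓ with ⟨h, h'⟩ | ⟨h, h'⟩ | ⟨h, h'⟩ <;>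
        · simp only [Pi.mul_apply, Pi.add_apply, Pi.intCast_apply, h, h',
            hPdef, hQdef, hUdef, hVdef]
          push_cast
          ring
  · intro p hp k u hk hu
    set P : ℤ := (p : ℤ) ^ k with hPdef
    set U : ℤ := (p : ℤ) ^ u with hUdef
    have hP1 : (1 : ℤ) < P := by
      rw [hPdef]; exact_mod_cast Nat.one_lt_pow (Nat.one_le_iff_ne_zero.mp hk) hp.one_lt
    have hU1 : (1 : ℤ) < U := by
      rw [hUdef]; exact_mod_cast Nat.one_lt_pow (Nat.one_le_iff_ne_zero.mp hu) hp.one_lt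
    have hP1' : P - 1 ≠ 0 := sub_ne_zero.mpr (ne_of_gt hP1)
    have hU1' : U - 1 ≠ 0 := sub_ne_zero.mpr (ne_of_gt hU1)
    apply adeleRel_of _ _ (P - 1) (P - U) 0 (U - 1) 1 P 1
    · have : (P - 1) * (U - 1) - (P - U) * 0 = (P - 1) * (U - 1) := by ring
      rw [this]
      exact mul_ne_zero hP1' hU1'
    · simpa using hP1'
    · simpa using hP1'
    · simpa using hP1'
    · funext ℓ
      rcases sFun_cases1 p hp k u ℓ with ⟨h, _⟩ | ⟨h, _⟩ <;>
        · simp only [Pi.mul_apply, Pi.sub_apply, Pi.intCast_apply, Pi.zero_apply, h,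
            hPdef, hUdef]
          push_cast
          ring
    · funext ℓ
      rcases sFun_cases1 p hp k u ℓ with ⟨h, h'⟩ | ⟨h, h'⟩ <;>
        · simp only [Pi.mul_apply, Pi.add_apply, Pi.intCast_apply, h, h', hPdef, hUdef]
          push_cast
          ring
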